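/- A subspace of a topological space homeomorphic to the ordinal space ω₁ that is contained in a compact subset must itself be compact, which is impossible; hence any homeomorphic copy of ω₁ inside a countably tight Hausdorff space X with a continuous map π : X → ω₁ having compact fibers over initial segments (i.e., π⁻¹([0,α]) compact for each α) is unbounded in the sense that π restricted to the copy has unbounded range. -/

import Mathlib

open scoped Ordinal

/-- The space `ω₁` of countable ordinals, with the (subspace of the) order topology. -/
abbrev Omega1 : Type _ := (Set.Iio (Ordinal.omega 1) : Set Ordinal)

/-- A space is countably tight if every point in the closure of a set is in the closure
of a countable subset. -/
def CountablyTight (X : Type*) [TopologicalSpace X] : Prop :=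
  ∀ (A : Set X) (x : X), x ∈ closure A → ∃ B ⊆ A, B.Countable ∧ x ∈ closure B

/-- In a countably tight Hausdorff space `X` with a continuous map `π : X → ω₁` whose
preimages of initial segments are compact, every homeomorphic copy of `ω₁` in `X` is
unbounded: `π` restricted to the copy has unbounded range. -/
theorem copy_of_omega1_unbounded {X : Type*} [TopologicalSpace X] [T2Space X]
    (ht : CountablyTight X) (π : X → Omega1) (hπ : Continuous π)
    (hcomp : ∀ α : Omega1, IsCompact (π ⁻¹' Set.Iic α))
    (W : Set X) (hW : Nonempty (Omega1 ≃ₜ W)) :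
    ∀ α : Omega1, ∃ x ∈ W, α ≤ π x := by
  obtain ⟨e⟩ := hW
  by_contra h
  push_neg at h
  obtain ⟨α, hα⟩ := h
  have hWK : W ⊆ π ⁻¹' Set.Iic α := fun x hx => le_of_lt (hα x hx)
  have hWclosed : IsClosed W := by
    rw [← closure_subset_iff_isClosed]
    intro x hx
    obtain ⟨B, hBW, hBc, hxB⟩ := ht W x hx
    set f : Omega1 → X := fun o => (e o : X) with hf
    have hfc : Continuous f := continuous_subtype_val.comp e.continuous
    set S : Set Omega1 := e.symm '' (Subtype.val ⁻¹' B) with hS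
    have hSc : S.Countable := ((hBc.preimage Subtype.val_injective).image _)
    have hbdd : ∃ β : Omega1, S ⊆ Set.Iic β := by
      rcases S.eq_empty_or_nonempty with hSe | hSne
      · exact ⟨⟨0, Ordinal.omega_pos 1⟩, by simp [hSe]⟩
      obtain ⟨g, hg⟩ := Set.Countable.exists_eq_range hSc hSne
      have hsup := Ordinal.iSup_lt_omega_one (f := fun n : ℕ => ((g n : Omega1) : Ordinal))
        (fun n => (g n).2)
      refine ⟨⟨_, hsup⟩, fun s hs => ?_⟩
      rw [hg] at hs
      obtain ⟨n, rfl⟩ := hs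
      exact Set.mem_Iic.mpr (Subtype.coe_le_coe.mp (Ordinal.le_iSup (fun n : ℕ => ((g n : Omega1) : Ordinal)) n))
    obtain ⟨β, hβ⟩ := hbdd
    have hIic : IsCompact (Set.Iic β : Set Omega1) := by
      rw [Subtype.isCompact_iff]
      have himg : Subtype.val '' (Set.Iic β : Set Omega1) = Set.Icc 0 (β : Ordinal) := by
        ext o
        simp only [Set.mem_image, Set.mem_Icc, zero_le, true_and]
        constructor
        · rintro ⟨p, hp, rfl⟩; exact hp
        · intro ho; exact ⟨⟨o, lt_of_le_of_lt ho β.2⟩, ho, rfl⟩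
      rw [himg]
      exact isCompact_Icc
    have hC : IsCompact (closure S) :=
      hIic.of_isClosed_subset isClosed_closure (closure_minimal hβ isClosed_Iic)
    have hfC : IsCompact (f '' closure S) := hC.image hfc
    have hBsub : B ⊆ f '' closure S := by
      intro b hb
      have hbW : b ∈ W := hBW hb
      refine ⟨e.symm ⟨b, hbW⟩, subset_closure ⟨⟨b, hbW⟩, hb, rfl⟩, ?_⟩
      simp [hf]
    have hcl : closure B ⊆ f '' closure S := closure_minimal hBsub hfC.isClosed
    obtain ⟨o, _, rfl⟩ := hcl hxB
    exact (e o).2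
  have hWcomp : IsCompact W := (hcomp α).of_isClosed_subset hWclosed hWK
  have : CompactSpace W := isCompact_iff_compactSpace.mp hWcomp
  have hu : IsCompact (⇑e.symm '' Set.univ) := isCompact_univ.image e.symm.continuous
  rw [Set.image_univ, Set.range_eq_univ.mpr e.symm.surjective] at hu
  obtain ⟨m, -, hm⟩ := hu.exists_isGreatest ⟨⟨0, Ordinal.omega_pos 1⟩, Set.mem_univ _⟩
  have hm1 : (m : Ordinal) + 1 < Ordinal.omega 1 := by
    have := (Cardinal.isSuccLimit_omega 1).succ_lt m.2
    rwa [← Ordinal.add_one_eq_succ] at this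
  have := hm (Set.mem_univ (⟨(m : Ordinal) + 1, hm1⟩ : Omega1))
  rw [← Subtype.coe_le_coe] at this
  exact absurd this (by simp)
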